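/- arXiv:1205.1119 — 5 statements merged into one kernel-verified Lean document; each statement's English description precedes it below -/
import Mathlib

section
/- Let ρ be a real n×n matrix and let S = (ρ + ρᵀ)/2 be its symmetric part. If ρ satisfies the optical constraint ρ ρᵀ = α S for some nonzero real number α, then the matrix 1 − (2/α) ρ is orthogonal. -/
open Matrix

theorem optical_constraint_orthogonal {n : ℕ} (ρ : Matrix (Fin n) (Fin n) ℝ) (α : ℝ)
    (hα : α ≠ 0) (S : Matrix (Fin n) (Fin n) ℝ) (hS : S = (2⁻¹ : ℝ) • (ρ + ρᵀ))
    (hOC : ρ * ρᵀ = α • S) :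
    (1 - (2 / α) • ρ) * (1 - (2 / α) • ρ)ᵀ = 1 := by
  subst hS
  have h : ρ * ρᵀ = (α / 2) • (ρ + ρᵀ) := by
    rw [hOC, smul_smul]; ring_nf
  simp only [transpose_sub, transpose_one, transpose_smul, sub_mul, mul_sub, one_mul, mul_one,
    smul_mul_assoc, mul_smul_comm, smul_smul, h, smul_add]
  match_scalars <;> (field_simp; try ring)
end

section
/- Let ρ be a real n×n matrix with symmetric part S = (ρ + ρᵀ)/2. If ρ ρᵀ = α S for some nonzero real α, then ρ also satisfies ρᵀ ρ = α S; in particular ρ commutes with its transpose, i.e. ρ is a normal matrix. -/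
open Matrix

theorem optical_constraint_normal {n : ℕ} (ρ : Matrix (Fin n) (Fin n) ℝ) (α : ℝ)
    (hα : α ≠ 0) (S : Matrix (Fin n) (Fin n) ℝ) (hS : S = (2⁻¹ : ℝ) • (ρ + ρᵀ))
    (hOC : ρ * ρᵀ = α • S) :
    ρᵀ * ρ = α • S ∧ ρ * ρᵀ = ρᵀ * ρ := by
  have hOC' : ρ * ρᵀ = (α/2) • ρ + (α/2) • ρᵀ := by
    rw [hOC, hS, smul_smul, smul_add]; ring_nf
  set A : Matrix (Fin n) (Fin n) ℝ := ρ - (α/2) • 1 with hA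
  set B : Matrix (Fin n) (Fin n) ℝ := ρᵀ - (α/2) • 1 with hB
  have hd : (α^2/4 : ℝ) ≠ 0 := by positivity
  have hAB : A * B = (α^2/4) • (1 : Matrix (Fin n) (Fin n) ℝ) := by
    rw [hA, hB]
    simp only [sub_mul, mul_sub, Matrix.smul_mul, Matrix.mul_smul, one_mul, mul_one,
      smul_smul, hOC']
    module
  have h1 : A * ((α^2/4)⁻¹ • B) = 1 := by
    rw [Matrix.mul_smul, hAB, smul_smul, inv_mul_cancel₀ hd, one_smul]
  have h2 : ((α^2/4)⁻¹ • B) * A = 1 := mul_eq_one_comm.mp h1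
  have hBA : B * A = (α^2/4) • (1 : Matrix (Fin n) (Fin n) ℝ) := by
    have := congrArg (fun M => (α^2/4) • M) h2
    simp only [Matrix.smul_mul, smul_smul, mul_inv_cancel₀ hd, one_smul, smul_eq_mul, mul_one] at this
    simpa using this
  have key : ρᵀ * ρ = (α/2) • ρ + (α/2) • ρᵀ := by
    have := hBA
    rw [hA, hB] at this
    simp only [sub_mul, mul_sub, Matrix.smul_mul, Matrix.mul_smul, one_mul, mul_one,
      smul_smul] at this
    linear_combination (norm := module) this
  have goal1 : ρᵀ * ρ = α • S := by
    rw [key, hS, smul_smul, smul_add]; ring_nf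
  exact ⟨goal1, hOC.trans goal1.symm⟩
end

section
/- Let s₂, s₃, s₄ be real numbers and suppose (p, q, r) ∈ ℝ³ is a nonzero solution of the four linear equations: (s₃−s₂−s₄)·q − (s₄−s₂−s₃)·r = 0, (s₂−s₄−s₃)·p − (s₄−s₂−s₃)·r = 0, (s₃²−s₂²−s₄²)·q − (s₄²−s₂²−s₃²)·r = 0, (s₂²−s₄²−s₃²)·p − (s₄²−s₂²−s₃²)·r = 0. Then s₂·(s₃−s₄)·(s₂−s₃−s₄)² = 0 and s₃·(s₂−s₄)·(s₂+s₄−s₃)² = 0. In particular, all nonvanishing elements of {s₂, s₃, s₄} are equal. -/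
theorem nontwisting_PhiA_zero_system (s₂ s₃ s₄ p q r : ℝ)
    (hpqr : (p, q, r) ≠ (0, 0, 0))
    (h1 : (s₃ - s₂ - s₄) * q - (s₄ - s₂ - s₃) * r = 0)
    (h2 : (s₂ - s₄ - s₃) * p - (s₄ - s₂ - s₃) * r = 0)
    (h3 : (s₃ ^ 2 - s₂ ^ 2 - s₄ ^ 2) * q - (s₄ ^ 2 - s₂ ^ 2 - s₃ ^ 2) * r = 0)
    (h4 : (s₂ ^ 2 - s₄ ^ 2 - s₃ ^ 2) * p - (s₄ ^ 2 - s₂ ^ 2 - s₃ ^ 2) * r = 0) :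
    s₂ * (s₃ - s₄) * (s₂ - s₃ - s₄) ^ 2 = 0 ∧
    s₃ * (s₂ - s₄) * (s₂ + s₄ - s₃) ^ 2 = 0 ∧
    ((s₂ ≠ 0 → s₃ ≠ 0 → s₂ = s₃) ∧ (s₂ ≠ 0 → s₄ ≠ 0 → s₂ = s₄) ∧
      (s₃ ≠ 0 → s₄ ≠ 0 → s₃ = s₄)) := by
  have key : s₂ * (s₃ - s₄) * (s₂ - s₃ - s₄) ^ 2 = 0 ∧
      s₃ * (s₂ - s₄) * (s₂ + s₄ - s₃) ^ 2 = 0 := by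
    by_cases hr : r = 0
    · subst hr
      by_cases hq : q = 0
      · subst hq
        have hp : p ≠ 0 := by
          intro hp; exact hpqr (by simp [hp])
        have hc : s₂ - s₄ - s₃ = 0 := by
          have this : (s₂ - s₄ - s₃) * p = 0 := by linear_combination h2
          rw [mul_eq_zero] at this
          rcases this with h | h
          · exact h
          · exact absurd h hp
        have hC : s₂ ^ 2 - s₄ ^ 2 - s₃ ^ 2 = 0 := by
          have this : (s₂ ^ 2 - s₄ ^ 2 - s₃ ^ 2) * p = 0 := by linear_combination h4
          rw [mul_eq_zero] at this
          rcases this with h | h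
          · exact h
          · exact absurd h hp
        have hs2 : s₂ = s₃ + s₄ := by linarith
        subst hs2
        have h34 : s₃ * s₄ = 0 := by nlinarith [hC]
        rcases mul_eq_zero.mp h34 with h | h <;> subst h <;>
          constructor <;> ring
      · have ha : s₃ - s₂ - s₄ = 0 := by
          have this : (s₃ - s₂ - s₄) * q = 0 := by linear_combination h1
          rw [mul_eq_zero] at this
          rcases this with h | h
          · exact h
          · exact absurd h hq
        have hA : s₃ ^ 2 - s₂ ^ 2 - s₄ ^ 2 = 0 := by
          have this : (s₃ ^ 2 - s₂ ^ 2 - s₄ ^ 2) * q = 0 := by linear_combination h3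
          rw [mul_eq_zero] at this
          rcases this with h | h
          · exact h
          · exact absurd h hq
        have hs3 : s₃ = s₂ + s₄ := by linarith
        subst hs3
        have h24 : s₂ * s₄ = 0 := by nlinarith [hA]
        rcases mul_eq_zero.mp h24 with h | h <;> subst h <;>
          constructor <;> ring
    · have hd1 : s₂ * (s₃ - s₄) * (s₂ - s₃ - s₄) * r = 0 := by
        linear_combination (-(s₃ ^ 2 - s₂ ^ 2 - s₄ ^ 2) / 2) * h1 +
          ((s₃ - s₂ - s₄) / 2) * h3
      have hd2 : s₃ * (s₂ - s₄) * (s₂ + s₄ - s₃) * r = 0 := by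
        linear_combination ((s₂ ^ 2 - s₄ ^ 2 - s₃ ^ 2) / 2) * h2 +
          (-(s₂ - s₄ - s₃) / 2) * h4
      have e1 : s₂ * (s₃ - s₄) * (s₂ - s₃ - s₄) = 0 :=
        (mul_eq_zero.mp hd1).resolve_right hr
      have e2 : s₃ * (s₂ - s₄) * (s₂ + s₄ - s₃) = 0 :=
        (mul_eq_zero.mp hd2).resolve_right hr
      constructor
      · linear_combination (s₂ - s₃ - s₄) * e1
      · linear_combination (s₂ + s₄ - s₃) * e2
  obtain ⟨T1, T2⟩ := key
  have c1 : s₂ = 0 ∨ s₃ = s₄ ∨ s₂ - s₃ - s₄ = 0 := by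
    rcases mul_eq_zero.mp T1 with h | h
    · rcases mul_eq_zero.mp h with h | h
      · exact Or.inl h
      · exact Or.inr (Or.inl (by linarith))
    · exact Or.inr (Or.inr (by nlinarith [sq_nonneg (s₂ - s₃ - s₄)]))
  have c2 : s₃ = 0 ∨ s₂ = s₄ ∨ s₂ + s₄ - s₃ = 0 := by
    rcases mul_eq_zero.mp T2 with h | h
    · rcases mul_eq_zero.mp h with h | h
      · exact Or.inl h
      · exact Or.inr (Or.inl (by linarith))
    · exact Or.inr (Or.inr (by nlinarith [sq_nonneg (s₂ + s₄ - s₃)]))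
  refine ⟨T1, T2, ?_, ?_, ?_⟩ <;> intro hx hy <;>
    rcases c1 with h1' | h1' | h1' <;> rcases c2 with h2' | h2' | h2' <;>
      first
        | linarith
        | (exact absurd h1' hx)
        | (exact absurd h2' hx)
        | (exact absurd h1' hy)
        | (exact absurd h2' hy)
        | (exact absurd (by linarith : s₂ = 0) hx)
        | (exact absurd (by linarith : s₃ = 0) hx)
        | (exact absurd (by linarith : s₃ = 0) hy)
        | (exact absurd (by linarith : s₄ = 0) hy)
end

section
/- Let s₂, s₃, s₄ be real numbers with s₂ ≠ 0, s₃ ≠ 0, and s₂ ≠ s₃, and define ρᵢ(r) = sᵢ/(1 + r·sᵢ). Then it is impossible that ρ₄(r)² = (ρ₂(r) − ρ₃(r))² holds for all r in some open interval containing 0 on which all denominators are nonzero. -/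
open Polynomial

theorem no_distinct_nonzero_eigenvalues (s₂ s₃ s₄ : ℝ)
    (h₂ : s₂ ≠ 0) (h₃ : s₃ ≠ 0) (hne : s₂ ≠ s₃) :
    ¬ ∃ I : Set ℝ, IsOpen I ∧ 0 ∈ I ∧
      (∀ r ∈ I, 1 + r * s₂ ≠ 0 ∧ 1 + r * s₃ ≠ 0 ∧ 1 + r * s₄ ≠ 0) ∧
      (∀ r ∈ I, (s₄ / (1 + r * s₄)) ^ 2 =
        (s₂ / (1 + r * s₂) - s₃ / (1 + r * s₃)) ^ 2) := by
  rintro ⟨I, hIo, h0, hden, heq⟩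
  obtain ⟨ε, hε, hball⟩ := Metric.isOpen_iff.mp hIo 0 h0
  set P : Polynomial ℝ :=
    C (s₄ ^ 2) * ((1 + C s₂ * X) * (1 + C s₃ * X)) ^ 2
      - C ((s₂ - s₃) ^ 2) * (1 + C s₄ * X) ^ 2 with hP
  have hevalP : ∀ r : ℝ, P.eval r =
      s₄ ^ 2 * ((1 + s₂ * r) * (1 + s₃ * r)) ^ 2
        - (s₂ - s₃) ^ 2 * (1 + s₄ * r) ^ 2 := by
    intro r; simp [hP]
  have hroots : ∀ r ∈ I, P.IsRoot r := by
    intro r hr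
    obtain ⟨d2, d3, d4⟩ := hden r hr
    have h := heq r hr
    have d2' : 1 + s₂ * r ≠ 0 := by rwa [mul_comm]
    have d3' : 1 + s₃ * r ≠ 0 := by rwa [mul_comm]
    have d4' : 1 + s₄ * r ≠ 0 := by rwa [mul_comm]
    rw [IsRoot, hevalP, sub_eq_zero]
    field_simp at h
    linear_combination h
  have hinf : {r : ℝ | P.IsRoot r}.Infinite := by
    refine (Set.Ioo_infinite (a := -ε) (b := ε) (by linarith)).mono ?_
    intro r hr
    apply hroots
    apply hball
    rw [Real.ball_eq_Ioo]
    simpa using hr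
  have hP0 : P = 0 := Polynomial.eq_zero_of_infinite_isRoot _ hinf
  have hall : ∀ r : ℝ,
      s₄ ^ 2 * ((1 + s₂ * r) * (1 + s₃ * r)) ^ 2
        = (s₂ - s₃) ^ 2 * (1 + s₄ * r) ^ 2 := by
    intro r
    have := congrArg (Polynomial.eval r) hP0
    rw [hevalP] at this
    simpa [sub_eq_zero] using this
  have hsub : (s₂ - s₃) ≠ 0 := sub_ne_zero.mpr hne
  have key : ∀ s : ℝ, s ≠ 0 → (1 + s₂ * (-1/s)) * (1 + s₃ * (-1/s)) = 0 → s₄ = s := by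
    intro s hs hzero
    have h := hall (-1/s)
    rw [hzero] at h
    have h' : (s₂ - s₃) ^ 2 * (1 + s₄ * (-1/s)) ^ 2 = 0 := by linarith [h]
    rcases mul_eq_zero.mp h' with h'' | h''
    · exact absurd (pow_eq_zero_iff (by norm_num) |>.mp h'') hsub
    · have : 1 + s₄ * (-1/s) = 0 := pow_eq_zero_iff (by norm_num) |>.mp h''
      field_simp at this
      linarith
  have e2 : s₄ = s₂ := by
    apply key s₂ h₂
    have : 1 + s₂ * (-1/s₂) = 0 := by field_simp; norm_num
    rw [this, zero_mul]
  have e3 : s₄ = s₃ := by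
    apply key s₃ h₃
    have : 1 + s₃ * (-1/s₃) = 0 := by field_simp; norm_num
    rw [this, mul_zero]
  exact hne (e2 ▸ e3)
end

section
/- Let s₂ ≠ 0 and A ≠ 0 be real numbers, set s₄ = (s₂² + A²)/s₂, and let ρ be the 3×3 matrix with symmetric part S = diag(s₂, s₂, s₄) and antisymmetric part having only nonzero components A₂₃ = A = −A₃₂. Let Φᵢⱼ be the 3×3 matrix with symmetric part diag(Φˢ₂₂, Φˢ₂₂, Φˢ₄₄) and antisymmetric part with only nonzero components Φᴬ₂₃ = −Φᴬ₃₂, where Φˢ₂₂ = ((s₂² − A²)/(s₂² + A²))·Φˢ₄₄ and Φᴬ₂₃ = (2 A s₂/(s₂² + A²))·Φˢ₄₄. Then ρ and Φᵢⱼ commute: [ρ, Φ] = 0, and ρ satisfies the optical constraint ρ ρᵀ = s₄ · S. -/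
open Matrix

theorem case_i_commute_and_optical (s₂ A : ℝ) (hs : s₂ ≠ 0) (hA : A ≠ 0)
    (s₄ : ℝ) (hs₄ : s₄ = (s₂ ^ 2 + A ^ 2) / s₂)
    (Φs₂₂ Φs₄₄ Φa₂₃ : ℝ)
    (h22 : Φs₂₂ = ((s₂ ^ 2 - A ^ 2) / (s₂ ^ 2 + A ^ 2)) * Φs₄₄)
    (h23 : Φa₂₃ = (2 * A * s₂ / (s₂ ^ 2 + A ^ 2)) * Φs₄₄)
    (ρ Φ S : Matrix (Fin 3) (Fin 3) ℝ)
    (hS : S = !![s₂, 0, 0; 0, s₂, 0; 0, 0, s₄])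
    (hρ : ρ = S + !![0, A, 0; -A, 0, 0; 0, 0, 0])
    (hΦ : Φ = !![Φs₂₂, 0, 0; 0, Φs₂₂, 0; 0, 0, Φs₄₄] +
              !![0, Φa₂₃, 0; -Φa₂₃, 0, 0; 0, 0, 0]) :
    ρ * Φ = Φ * ρ ∧ ρ * ρᵀ = s₄ • S := by
  subst hs₄ h22 h23 hS
  have hρ' : ρ = !![s₂, A, 0; -A, s₂, 0; 0, 0, (s₂ ^ 2 + A ^ 2) / s₂] := by
    subst hρ; ext i j; fin_cases i <;> fin_cases j <;> simp [Matrix.vecHead, Matrix.vecTail]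
  have hρt : ρᵀ = !![s₂, -A, 0; A, s₂, 0; 0, 0, (s₂ ^ 2 + A ^ 2) / s₂] := by
    rw [hρ']; ext i j; fin_cases i <;> fin_cases j <;> rfl
  constructor <;>
  · simp only [hρt, hρ', hΦ] <;> ext i j <;>
    fin_cases i <;> fin_cases j <;>
      simp [Matrix.mul_apply, Fin.sum_univ_succ, Matrix.transpose_apply,
            Matrix.vecHead, Matrix.vecTail] <;>
      (try field_simp) <;> (try ring)
end
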